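/- In the nearest-common-ancestor labeling based on heavy-path decomposition, the nearest common ancestor of two nodes u and v can be determined from their labels alone: writing ℓ_u = ℓ·(a₀,a₁)·ℓ_u' and ℓ_v = ℓ·(b₀,b₁)·ℓ_v' where ℓ is the longest common prefix of whole pairs, the nearest common ancestor is the node with label ℓ·(a₀, min(a₁,b₁)) if a₀ = b₀, and otherwise (if ℓ is nonempty, ending in some pair (c₀,c₁)) the node whose label is ℓ. -/

import Mathlib

/-- A finite rooted tree given by parent pointers: the root is a fixed point of
`parent`, and iterating `parent` from any node eventually reaches the root. -/
structure ParentTree (V : Type*) where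
  root : V
  parent : V → V
  parent_root : parent root = root
  reaches_root : ∀ v, ∃ k, parent^[k] v = root

variable {V : Type*}

/-- The number of nodes in the subtree rooted at `v`. -/
noncomputable def ParentTree.size (t : ParentTree V) (v : V) : ℕ :=
  Set.ncard {u | ∃ k, t.parent^[k] u = v}

/-- The depth of a node: its distance to the root. -/
def ParentTree.depth [DecidableEq V] (t : ParentTree V) (v : V) : ℕ :=
  Nat.find (t.reaches_root v)

/-- `c` is a child of `u`. -/
def ParentTree.IsChild (t : ParentTree V) (c u : V) : Prop :=
  c ≠ u ∧ t.parent c = u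

/-- `heavy` designates, for every internal node `u`, exactly one child of `u`
whose subtree size is maximal among all children of `u`. -/
def HeavyValid (t : ParentTree V) (heavy : V → V) : Prop :=
  ∀ u, (∃ c, t.IsChild c u) →
    t.IsChild (heavy u) u ∧ ∀ c, t.IsChild c u → t.size c ≤ t.size (heavy u)

/-- Increment the distance component of the last pair of a label. -/
def incLast (l : List (ℕ × ℕ)) : List (ℕ × ℕ) :=
  l.dropLast ++ [(l.getLast!.1, l.getLast!.2 + 1)]

/-- `ℓ` is the nearest-common-ancestor labeling of the rooted tree `t` based on
the heavy-path decomposition given by `heavy`: the root is labeled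
`[(id root, 0)]`, a heavy child inherits its parent's label with the distance of
the last pair incremented by one, and a light child `v` gets its parent's label
with the pair `(id v, 0)` appended. -/
def IsNCALabeling (t : ParentTree V) (heavy : V → V) (idf : V → ℕ)
    (ℓ : V → List (ℕ × ℕ)) : Prop :=
  ℓ t.root = [(idf t.root, 0)] ∧
  ∀ v, v ≠ t.root →
    (heavy (t.parent v) = v → ℓ v = incLast (ℓ (t.parent v))) ∧
    (heavy (t.parent v) ≠ v → ℓ v = ℓ (t.parent v) ++ [(idf v, 0)])

/-- `a` is an ancestor of `v` (possibly `v` itself). -/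
def ParentTree.Anc (t : ParentTree V) (a v : V) : Prop :=
  ∃ k, t.parent^[k] v = a

/-- `a` is the nearest common ancestor of `u` and `v`: a common ancestor such
that every common ancestor of `u` and `v` is an ancestor of `a`. -/
def IsNca (t : ParentTree V) (a u v : V) : Prop :=
  t.Anc a u ∧ t.Anc a v ∧ ∀ b, t.Anc b u → t.Anc b v → t.Anc b a


section Aux

variable {t : ParentTree V} {heavy : V → V} {idf : V → ℕ} {ℓ : V → List (ℕ × ℕ)}

/-- Induction over a parent tree. -/
lemma ParentTree.tree_induction (t : ParentTree V) (P : V → Prop) (h0 : P t.root)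
    (h1 : ∀ v, v ≠ t.root → P (t.parent v) → P v) : ∀ v, P v := by
  have key : ∀ k v, t.parent^[k] v = t.root → P v := by
    intro k
    induction k with
    | zero =>
      intro v hv
      simp only [Function.iterate_zero, id_eq] at hv
      exact hv ▸ h0
    | succ k ih =>
      intro v hv
      by_cases h : v = t.root
      · exact h ▸ h0
      · exact h1 v h (ih _ (by rwa [Function.iterate_succ_apply] at hv))
  intro v
  obtain ⟨k, hk⟩ := t.reaches_root v
  exact key k v hk

/-- The label order reflecting ancestry. -/
def LabLE (A B : List (ℕ × ℕ)) : Prop :=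
  ∃ (P : List (ℕ × ℕ)) (x m m' : ℕ) (rest : List (ℕ × ℕ)), m ≤ m' ∧ A = P ++ [(x, m)] ∧ B = P ++ (x, m') :: rest

lemma eq_nil_or_concat'' (l : List (ℕ × ℕ)) : l = [] ∨ ∃ L b, l = L ++ [b] := by
  rcases List.eq_nil_or_concat l with h | ⟨L, b, h⟩
  · exact Or.inl h
  · exact Or.inr ⟨L, b, by rw [h, List.concat_eq_append]⟩

lemma concat_eq_concat {α : Type*} {P Q : List α} {p q : α} (h : P ++ [p] = Q ++ [q]) :
    P = Q ∧ p = q := by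
  have := List.append_inj' h rfl
  simpa using this

lemma incLast_concat (Q : List (ℕ × ℕ)) (y n : ℕ) :
    incLast (Q ++ [(y, n)]) = Q ++ [(y, n + 1)] := by
  rw [incLast, List.dropLast_concat, List.getLast!_of_getLast? List.getLast?_concat]

lemma lab_ne_nil (hl : IsNCALabeling t heavy idf ℓ) : ∀ v, ℓ v ≠ [] := by
  refine t.tree_induction _ ?_ ?_
  · rw [hl.1]; simp
  · intro v hv _
    by_cases hh : heavy (t.parent v) = v
    · rw [(hl.2 v hv).1 hh]; simp [incLast]
    · rw [(hl.2 v hv).2 hh]; simp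

lemma lab_concat (hl : IsNCALabeling t heavy idf ℓ) (v : V) :
    ∃ Q y n, ℓ v = Q ++ [(y, n)] := by
  obtain ⟨Q, ⟨y, n⟩, h⟩ := (eq_nil_or_concat'' (ℓ v)).resolve_left (lab_ne_nil hl v)
  exact ⟨Q, y, n, h⟩

lemma lab_form (hl : IsNCALabeling t heavy idf ℓ) (v : V) (hv : v ≠ t.root) :
    (heavy (t.parent v) = v ∧
      ∃ Q y n, ℓ (t.parent v) = Q ++ [(y, n)] ∧ ℓ v = Q ++ [(y, n + 1)]) ∨
    (heavy (t.parent v) ≠ v ∧ ℓ v = ℓ (t.parent v) ++ [(idf v, 0)]) := by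
  by_cases hh : heavy (t.parent v) = v
  · obtain ⟨Q, y, n, hQ⟩ := lab_concat hl (t.parent v)
    exact Or.inl ⟨hh, Q, y, n, hQ, by rw [(hl.2 v hv).1 hh, hQ, incLast_concat]⟩
  · exact Or.inr ⟨hh, (hl.2 v hv).2 hh⟩

lemma labLE_refl (hl : IsNCALabeling t heavy idf ℓ) (v : V) : LabLE (ℓ v) (ℓ v) := by
  obtain ⟨Q, y, n, hQ⟩ := lab_concat hl v
  exact ⟨Q, y, n, n, [], le_rfl, hQ, hQ⟩

lemma labLE_parent (hl : IsNCALabeling t heavy idf ℓ) (v : V) (hv : v ≠ t.root) :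
    LabLE (ℓ (t.parent v)) (ℓ v) := by
  rcases lab_form hl v hv with ⟨_, Q, y, n, hp, hv'⟩ | ⟨_, hv'⟩
  · exact ⟨Q, y, n, n + 1, [], Nat.le_succ n, hp, hv'⟩
  · obtain ⟨Q, y, n, hQ⟩ := lab_concat hl (t.parent v)
    exact ⟨Q, y, n, n, [(idf v, 0)], le_rfl, hQ, by rw [hv', hQ]; simp⟩

lemma labLE_trans {A B C : List (ℕ × ℕ)} (h1 : LabLE A B) (h2 : LabLE B C) : LabLE A C := by
  obtain ⟨P, x, m, m', r, hm, hA, hB⟩ := h1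
  obtain ⟨Q, y, n, n', s, hn, hB', hC⟩ := h2
  rw [hB] at hB'
  rcases eq_nil_or_concat'' r with rfl | ⟨r', q, rfl⟩
  · obtain ⟨rfl, hq⟩ := concat_eq_concat hB'
    obtain ⟨rfl, rfl⟩ := Prod.mk.injEq _ _ _ _ ▸ hq
    exact ⟨P, x, m, n', s, le_trans hm hn, hA, hC⟩
  · have hB2 : (P ++ (x, m') :: r') ++ [q] = Q ++ [(y, n)] := by simpa using hB'
    obtain ⟨hQ, rfl⟩ := concat_eq_concat hB2
    exact ⟨P, x, m, m', r' ++ (y, n') :: s, hm, hA, by rw [hC, ← hQ]; simp⟩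

lemma anc_step {c v : V} (h : t.Anc c (t.parent v)) : t.Anc c v := by
  obtain ⟨k, hk⟩ := h
  exact ⟨k + 1, by rw [Function.iterate_succ_apply]; exact hk⟩

lemma labLE_of_anc (hl : IsNCALabeling t heavy idf ℓ) {a v : V} (h : t.Anc a v) :
    LabLE (ℓ a) (ℓ v) := by
  have key : ∀ k w, t.parent^[k] w = a → LabLE (ℓ a) (ℓ w) := by
    intro k
    induction k with
    | zero =>
      intro w hw
      simp only [Function.iterate_zero, id_eq] at hw
      subst hw
      exact labLE_refl hl _
    | succ k ih =>
      intro w hw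
      by_cases hr : w = t.root
      · subst hr
        rw [Function.iterate_fixed t.parent_root] at hw
        subst hw
        exact labLE_refl hl _
      · exact labLE_trans (ih _ (by rwa [Function.iterate_succ_apply] at hw))
          (labLE_parent hl w hr)
  obtain ⟨k, hk⟩ := h
  exact key k v hk

lemma exists_of_labLE (hl : IsNCALabeling t heavy idf ℓ) :
    ∀ v A, LabLE A (ℓ v) → ∃ c, ℓ c = A ∧ t.Anc c v := by
  refine t.tree_induction (fun v => ∀ A, LabLE A (ℓ v) → ∃ c, ℓ c = A ∧ t.Anc c v) ?_ ?_
  · rintro A ⟨P, x, m, m', rest, hm, hA, hB⟩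
    rw [hl.1] at hB
    rcases P with _ | ⟨p, P'⟩
    · simp only [List.nil_append, List.cons.injEq, Prod.mk.injEq] at hB
      obtain ⟨⟨rfl, rfl⟩, rfl⟩ := hB
      refine ⟨t.root, ?_, ⟨0, rfl⟩⟩
      rw [hl.1, hA]
      simp [Nat.le_zero.mp hm]
    · exfalso
      have := congrArg List.length hB
      simp [List.length_append] at this
  · rintro v hv ih A ⟨P, x, m, m', rest, hm, hA, hB⟩
    rcases lab_form hl v hv with ⟨_, Q, y, n, hp, hv'⟩ | ⟨_, hv'⟩
    · rw [hv'] at hB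
      rcases eq_nil_or_concat'' rest with rfl | ⟨r', q, rfl⟩
      · obtain ⟨rfl, hq⟩ := concat_eq_concat hB.symm
        obtain ⟨rfl, hq2⟩ := Prod.mk.injEq _ _ _ _ ▸ hq
        rcases eq_or_lt_of_le hm with rfl | hlt
        · exact ⟨v, by rw [hA, hv', hq2], ⟨0, rfl⟩⟩
        · obtain ⟨c, hc, hanc⟩ := ih A ⟨P, x, m, n, [], by omega, hA, hp⟩
          exact ⟨c, hc, anc_step hanc⟩
      · have hB2 : (P ++ (x, m') :: r') ++ [q] = Q ++ [(y, n + 1)] := by simpa using hB.symm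
        obtain ⟨hQ, rfl⟩ := concat_eq_concat hB2
        obtain ⟨c, hc, hanc⟩ :=
          ih A ⟨P, x, m, m', r' ++ [(y, n)], hm, hA, by rw [hp, ← hQ]; simp⟩
        exact ⟨c, hc, anc_step hanc⟩
    · rw [hv'] at hB
      rcases eq_nil_or_concat'' rest with rfl | ⟨r', q, rfl⟩
      · obtain ⟨hQ, hq⟩ := concat_eq_concat hB
        obtain ⟨rfl, h0⟩ := Prod.mk.injEq _ _ _ _ ▸ hq
        refine ⟨v, ?_, ⟨0, rfl⟩⟩
        rw [hA, hv', hQ]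
        simp [show m = 0 by omega]
      · have hB2 : ℓ (t.parent v) ++ [(idf v, 0)] = (P ++ (x, m') :: r') ++ [q] := by
          simpa using hB
        obtain ⟨hQ, rfl⟩ := concat_eq_concat hB2
        obtain ⟨c, hc, hanc⟩ := ih A ⟨P, x, m, m', r', hm, hA, hQ⟩
        exact ⟨c, hc, anc_step hanc⟩

lemma lab_inj (hl : IsNCALabeling t heavy idf ℓ) (hid : Function.Injective idf) :
    ∀ a b, ℓ a = ℓ b → a = b := by
  refine t.tree_induction (fun a => ∀ b, ℓ a = ℓ b → a = b) ?_ ?_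
  · intro b hb
    by_cases hbr : b = t.root
    · exact hbr.symm
    rcases lab_form hl b hbr with ⟨_, Q, y, n, _, hb'⟩ | ⟨_, hb'⟩
    · rw [hl.1, hb'] at hb
      obtain ⟨_, hq⟩ := concat_eq_concat
        (show ([] : List (ℕ × ℕ)) ++ [(idf t.root, 0)] = Q ++ [(y, n + 1)] by simpa using hb)
      exact absurd (congrArg Prod.snd hq) (by simp)
    · rw [hl.1, hb'] at hb
      obtain ⟨h1, _⟩ := concat_eq_concat
        (show ([] : List (ℕ × ℕ)) ++ [(idf t.root, 0)] =
          ℓ (t.parent b) ++ [(idf b, 0)] by simpa using hb)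
      exact absurd h1.symm (lab_ne_nil hl _)
  · intro a ha ih b hb
    rcases lab_form hl a ha with ⟨hha, Qa, ya, na, hpa, ha'⟩ | ⟨_, ha'⟩
    · by_cases hbr : b = t.root
      · subst hbr
        rw [hl.1, ha'] at hb
        obtain ⟨_, hq⟩ := concat_eq_concat
          (show Qa ++ [(ya, na + 1)] = ([] : List (ℕ × ℕ)) ++ [(idf t.root, 0)] by
            simpa using hb)
        exact absurd (congrArg Prod.snd hq) (by simp)
      rcases lab_form hl b hbr with ⟨hhb, Qb, yb, nb, hpb, hb'⟩ | ⟨_, hb'⟩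
      · rw [ha', hb'] at hb
        obtain ⟨hQ, hq⟩ := concat_eq_concat hb
        obtain ⟨h1, h2⟩ := Prod.mk.injEq _ _ _ _ ▸ hq
        have hpl : ℓ (t.parent a) = ℓ (t.parent b) := by
          rw [hpa, hpb, hQ, h1, Nat.succ_injective h2]
        have hpp := ih (t.parent b) hpl
        rw [← hha, ← hhb, hpp]
      · rw [ha', hb'] at hb
        obtain ⟨_, hq⟩ := concat_eq_concat hb
        exact absurd (congrArg Prod.snd hq) (by simp)
    · by_cases hbr : b = t.root
      · subst hbr
        rw [hl.1, ha'] at hb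
        obtain ⟨h1, _⟩ := concat_eq_concat
          (show ℓ (t.parent a) ++ [(idf a, 0)] =
            ([] : List (ℕ × ℕ)) ++ [(idf t.root, 0)] by simpa using hb)
        exact absurd h1 (lab_ne_nil hl _)
      rcases lab_form hl b hbr with ⟨_, Qb, yb, nb, _, hb'⟩ | ⟨_, hb'⟩
      · rw [ha', hb'] at hb
        obtain ⟨_, hq⟩ := concat_eq_concat hb
        exact absurd (congrArg Prod.snd hq) (by simp)
      · rw [ha', hb'] at hb
        obtain ⟨_, hq⟩ := concat_eq_concat hb
        exact hid (congrArg Prod.fst hq)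

lemma anc_of_labLE (hl : IsNCALabeling t heavy idf ℓ) (hid : Function.Injective idf)
    {a v : V} (h : LabLE (ℓ a) (ℓ v)) : t.Anc a v := by
  obtain ⟨c, hc, hanc⟩ := exists_of_labLE hl v _ h
  rwa [lab_inj hl hid c a hc] at hanc

lemma lab_head (hl : IsNCALabeling t heavy idf ℓ) :
    ∀ v, ∃ n rest, ℓ v = (idf t.root, n) :: rest := by
  refine t.tree_induction _ ⟨0, [], hl.1⟩ ?_
  rintro v hv ⟨n, rest, ih⟩
  rcases lab_form hl v hv with ⟨_, Q, y, k, hp, hv'⟩ | ⟨_, hv'⟩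
  · rw [ih] at hp
    rcases Q with _ | ⟨q, Q'⟩
    · simp only [List.nil_append, List.cons.injEq, Prod.mk.injEq] at hp
      obtain ⟨⟨rfl, rfl⟩, rfl⟩ := hp
      exact ⟨n + 1, [], by rw [hv']; simp⟩
    · simp only [List.cons_append, List.cons.injEq] at hp
      obtain ⟨rfl, _⟩ := hp
      exact ⟨n, Q' ++ [(y, k + 1)], by rw [hv']; simp⟩
  · exact ⟨n, rest ++ [(idf v, 0)], by rw [hv', ih]; simp⟩

lemma take_prefix {P L ru lu : List (ℕ × ℕ)} {p q : ℕ × ℕ}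
    (h : P ++ p :: ru = L ++ q :: lu) (hlen : P.length < L.length) :
    ∃ rL, L = P ++ p :: rL := by
  obtain ⟨d, hd⟩ : ∃ d, L.length - P.length = d + 1 := ⟨L.length - P.length - 1, by omega⟩
  refine ⟨ru.take d, ?_⟩
  have h1 : L = (P ++ p :: ru).take L.length := by rw [h]; simp
  rw [h1, List.take_append, List.take_of_length_le (le_of_lt hlen), hd,
    List.take_succ_cons]

lemma prefix_cases {P L ru lu : List (ℕ × ℕ)} {p q : ℕ × ℕ}
    (h : P ++ p :: ru = L ++ q :: lu) :
    (∃ rL, L = P ++ p :: rL) ∨ (P = L ∧ p = q) ∨ (∃ rP, P = L ++ q :: rP) := by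
  rcases Nat.lt_trichotomy P.length L.length with hlt | heq | hgt
  · exact Or.inl (take_prefix h hlt)
  · obtain ⟨hPL, hrest⟩ := List.append_inj h heq
    injection hrest with h1 _
    exact Or.inr (Or.inl ⟨hPL, h1⟩)
  · exact Or.inr (Or.inr (take_prefix h.symm hgt))

end Aux

/-- In the heavy-path NCA labeling, the nearest common ancestor of two nodes
`u` and `v` is determined by their labels alone: writing
`ℓ u = L ++ (a₀,a₁) :: lu` and `ℓ v = L ++ (b₀,b₁) :: lv` where `L` is the
longest common prefix of whole pairs (so `(a₀,a₁) ≠ (b₀,b₁)`), the nearest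
common ancestor is the node with label `L ++ [(a₀, min a₁ b₁)]` if `a₀ = b₀`,
and otherwise the node whose label is `L`. -/
theorem nca_from_labels [Fintype V]
    (t : ParentTree V) (heavy : V → V) (idf : V → ℕ) (ℓ : V → List (ℕ × ℕ))
    (hheavy : HeavyValid t heavy) (hid : Function.Injective idf)
    (hl : IsNCALabeling t heavy idf ℓ)
    (u v : V) (L : List (ℕ × ℕ)) (a₀ a₁ b₀ b₁ : ℕ) (lu lv : List (ℕ × ℕ))
    (hu : ℓ u = L ++ (a₀, a₁) :: lu) (hv : ℓ v = L ++ (b₀, b₁) :: lv)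
    (hdiff : (a₀, a₁) ≠ (b₀, b₁)) :
    (a₀ = b₀ → ∃ a, IsNca t a u v ∧ ℓ a = L ++ [(a₀, min a₁ b₁)]) ∧
    (a₀ ≠ b₀ → ∃ a, IsNca t a u v ∧ ℓ a = L) := by
  constructor
  · rintro rfl
    have hne : a₁ ≠ b₁ := fun h => hdiff (by rw [h])
    have hCu : LabLE (L ++ [(a₀, min a₁ b₁)]) (ℓ u) :=
      ⟨L, a₀, min a₁ b₁, a₁, lu, min_le_left _ _, rfl, hu⟩
    have hCv : LabLE (L ++ [(a₀, min a₁ b₁)]) (ℓ v) :=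
      ⟨L, a₀, min a₁ b₁, b₁, lv, min_le_right _ _, rfl, hv⟩
    obtain ⟨c, hc, hcu⟩ := exists_of_labLE hl u _ hCu
    refine ⟨c, ⟨hcu, anc_of_labLE hl hid (by rw [hc]; exact hCv), ?_⟩, hc⟩
    intro b hbu hbv
    obtain ⟨P, x, m, mu, ru, hmu, hbP, hPu⟩ := labLE_of_anc hl hbu
    obtain ⟨P', x', m2, mv, rv, hmv, hbP', hPv⟩ := labLE_of_anc hl hbv
    rw [hbP] at hbP'
    obtain ⟨hPP, hxm⟩ := concat_eq_concat hbP'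
    obtain ⟨rfl, rfl⟩ := Prod.mk.injEq _ _ _ _ ▸ hxm
    subst hPP
    rw [hu] at hPu
    rw [hv] at hPv
    apply anc_of_labLE hl hid
    rw [hbP, hc]
    rcases prefix_cases hPu.symm with ⟨rL, hrL⟩ | ⟨hPL, hpq⟩ | ⟨rP, hrP⟩
    · exact ⟨P, x, m, mu, rL ++ [(a₀, min a₁ b₁)], hmu, rfl, by rw [hrL]; simp⟩
    · obtain ⟨rfl, rfl⟩ := Prod.mk.injEq _ _ _ _ ▸ hpq
      subst hPL
      have h2 := (List.append_inj hPv rfl).2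
      injection h2 with h3 _
      have hmvb : mv = b₁ := (congrArg Prod.snd h3).symm
      exact ⟨P, x, m, min mu b₁, [], le_min hmu (hmvb ▸ hmv), rfl, rfl⟩
    · exfalso
      rw [hrP] at hPv
      have hPv2 : L ++ (a₀, b₁) :: lv = L ++ (a₀, a₁) :: (rP ++ (x, mv) :: rv) := by
        simpa using hPv
      have h2 := (List.append_inj hPv2 rfl).2
      injection h2 with h3 _
      exact hne (congrArg Prod.snd h3).symm
  · intro hab
    obtain ⟨nu, restu, hru⟩ := lab_head hl u
    obtain ⟨nv, restv, hrv⟩ := lab_head hl v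
    have hLne : L ≠ [] := by
      rintro rfl
      rw [hru] at hu
      rw [hrv] at hv
      simp only [List.nil_append, List.cons.injEq, Prod.mk.injEq] at hu hv
      exact hab (hu.1.1.symm.trans hv.1.1)
    obtain ⟨L', cp, rfl⟩ := (eq_nil_or_concat'' L).resolve_left hLne
    obtain ⟨c₀, c₁⟩ := cp
    have hCu : LabLE (L' ++ [(c₀, c₁)]) (ℓ u) :=
      ⟨L', c₀, c₁, c₁, (a₀, a₁) :: lu, le_rfl, rfl, by rw [hu]; simp⟩
    have hCv : LabLE (L' ++ [(c₀, c₁)]) (ℓ v) :=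
      ⟨L', c₀, c₁, c₁, (b₀, b₁) :: lv, le_rfl, rfl, by rw [hv]; simp⟩
    obtain ⟨c, hc, hcu⟩ := exists_of_labLE hl u _ hCu
    refine ⟨c, ⟨hcu, anc_of_labLE hl hid (by rw [hc]; exact hCv), ?_⟩, hc⟩
    intro b hbu hbv
    obtain ⟨P, x, m, mu, ru, hmu, hbP, hPu⟩ := labLE_of_anc hl hbu
    obtain ⟨P', x', m2, mv, rv, hmv, hbP', hPv⟩ := labLE_of_anc hl hbv
    rw [hbP] at hbP'
    obtain ⟨hPP, hxm⟩ := concat_eq_concat hbP'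
    obtain ⟨rfl, rfl⟩ := Prod.mk.injEq _ _ _ _ ▸ hxm
    subst hPP
    rw [hu] at hPu
    rw [hv] at hPv
    apply anc_of_labLE hl hid
    rw [hbP, hc]
    rcases prefix_cases hPu.symm with ⟨rL, hrL⟩ | ⟨hPL, hpq⟩ | ⟨rP, hrP⟩
    · exact ⟨P, x, m, mu, rL, hmu, rfl, hrL⟩
    · exfalso
      rw [hPL] at hPv
      have h2 := (List.append_inj hPv rfl).2
      injection h2 with h3 _
      exact hab ((congrArg Prod.fst hpq).symm.trans (congrArg Prod.fst h3).symm)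
    · exfalso
      rw [hrP] at hPv
      have hPv2 : (L' ++ [(c₀, c₁)]) ++ (b₀, b₁) :: lv =
          (L' ++ [(c₀, c₁)]) ++ (a₀, a₁) :: (rP ++ (x, mv) :: rv) := by
        simpa using hPv
      have h2 := (List.append_inj hPv2 rfl).2
      injection h2 with h3 _
      exact hab (congrArg Prod.fst h3).symm
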